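/- Let f be twice differentiable on [m,M] with α ≤ f'' ≤ β. Then for all t ∈ [m,M]: (α/2)(t-m)(M-t) ≤ L(t) - f(t) ≤ (β/2)(t-m)(M-t), where L(t) is the secant line through (m, f(m)) and (M, f(M)). -/

import Mathlib

open Set

/-- If `c ≤ f''` on `[m,M]` then `x ↦ f x - (c/2) x²` is convex on `[m,M]`. -/
lemma aux_convex_sub_quadratic (m M c : ℝ) (f f' f'' : ℝ → ℝ)
    (hf : ∀ x ∈ Icc m M, HasDerivWithinAt f (f' x) (Icc m M) x)
    (hf' : ∀ x ∈ Icc m M, HasDerivWithinAt f' (f'' x) (Icc m M) x)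
    (hc : ∀ x ∈ Icc m M, c ≤ f'' x) :
    ConvexOn ℝ (Icc m M) (fun x => f x - c / 2 * x ^ 2) := by
  apply convexOn_of_hasDerivWithinAt2_nonneg (convex_Icc m M)
    (f' := fun x => f' x - c * x) (f'' := fun x => f'' x - c)
  · exact ContinuousOn.sub (fun x hx => (hf x hx).continuousWithinAt)
      ((continuous_const.mul (continuous_pow 2)).continuousOn)
  · intro x hx
    have h1 : HasDerivWithinAt f (f' x) (interior (Icc m M)) x :=
      (hf x (interior_subset hx)).mono interior_subset
    have h2 : HasDerivWithinAt (fun x : ℝ => c / 2 * x ^ 2) (c * x) (interior (Icc m M)) x := by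
      have := ((hasDerivAt_pow 2 x).const_mul (c / 2)).hasDerivWithinAt
        (s := interior (Icc m M))
      exact this.congr_deriv (by ring)
    exact h1.sub h2
  · intro x hx
    have h1 : HasDerivWithinAt f' (f'' x) (interior (Icc m M)) x :=
      (hf' x (interior_subset hx)).mono interior_subset
    have h2 : HasDerivWithinAt (fun x : ℝ => c * x) c (interior (Icc m M)) x := by
      have := ((hasDerivAt_id x).const_mul c).hasDerivWithinAt
        (s := interior (Icc m M))
      simpa using this
    exact h1.sub h2
  · intro x hx
    have := hc x (interior_subset hx)
    linarith

theorem secant_error_bounds_of_second_deriv_bounds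
    (m M α β : ℝ) (hmM : m < M) (f : ℝ → ℝ)
    (hf : ∀ x ∈ Set.Icc m M, HasDerivWithinAt f (derivWithin f (Set.Icc m M) x) (Set.Icc m M) x)
    (hf' : ∀ x ∈ Set.Icc m M, HasDerivWithinAt (derivWithin f (Set.Icc m M))
      (derivWithin (derivWithin f (Set.Icc m M)) (Set.Icc m M) x) (Set.Icc m M) x)
    (hαβ : ∀ x ∈ Set.Icc m M,
      α ≤ derivWithin (derivWithin f (Set.Icc m M)) (Set.Icc m M) x ∧
        derivWithin (derivWithin f (Set.Icc m M)) (Set.Icc m M) x ≤ β) :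
    ∀ t ∈ Set.Icc m M,
      (α / 2) * (t - m) * (M - t)
          ≤ (((M - t) / (M - m)) * f m + ((t - m) / (M - m)) * f M) - f t ∧
      (((M - t) / (M - m)) * f m + ((t - m) / (M - m)) * f M) - f t
          ≤ (β / 2) * (t - m) * (M - t) := by
  intro t ht
  obtain ⟨htm, htM⟩ := ht
  have hMm : M - m ≠ 0 := by linarith
  set a : ℝ := (M - t) / (M - m) with ha_def
  set b : ℝ := (t - m) / (M - m) with hb_def
  have ha : 0 ≤ a := div_nonneg (by linarith) (by linarith)
  have hb : 0 ≤ b := div_nonneg (by linarith) (by linarith)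
  have hab : a + b = 1 := by rw [ha_def, hb_def]; field_simp; ring
  have hT : a * m + b * M = t := by rw [ha_def, hb_def]; field_simp; ring
  have key : a * m ^ 2 + b * M ^ 2 - t ^ 2 = (t - m) * (M - t) := by
    rw [ha_def, hb_def]; field_simp; ring
  have hmem : m ∈ Icc m M := ⟨le_refl m, hmM.le⟩
  have hMmem : M ∈ Icc m M := ⟨hmM.le, le_refl M⟩
  -- convex part
  have hconv : ConvexOn ℝ (Icc m M) (fun x => f x - α / 2 * x ^ 2) :=
    aux_convex_sub_quadratic m M α f _ _ hf hf' (fun x hx => (hαβ x hx).1)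
  have hconc : ConvexOn ℝ (Icc m M)
      (fun x => (fun y => -f y) x - (-β) / 2 * x ^ 2) :=
    aux_convex_sub_quadratic m M (-β) (fun y => -f y)
      (fun y => -(derivWithin f (Icc m M) y))
      (fun y => -(derivWithin (derivWithin f (Icc m M)) (Icc m M) y))
      (fun x hx => (hf x hx).neg) (fun x hx => (hf' x hx).neg)
      (fun x hx => by simpa using neg_le_neg (hαβ x hx).2)
  have h1 := hconv.2 hmem hMmem ha hb hab
  have h2 := hconc.2 hmem hMmem ha hb hab
  simp only [smul_eq_mul, hT] at h1 h2
  have e1 : α / 2 * (a * m ^ 2 + b * M ^ 2 - t ^ 2) = α / 2 * ((t - m) * (M - t)) := by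
    rw [key]
  have e2 : β / 2 * (a * m ^ 2 + b * M ^ 2 - t ^ 2) = β / 2 * ((t - m) * (M - t)) := by
    rw [key]
  constructor
  · nlinarith [h1, e1]
  · nlinarith [h2, e2]
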